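/- Let K = ℚ(θ) with θ a primitive cube root of unity, and A = K[x,y,z]/(θx³ + θ²y³ + z³), a graded ring with deg x = deg y = deg z = 1 and homogeneous maximal ideal m = (x,y,z). Then x, y form a homogeneous system of parameters for A (i.e., A/(x,y) is zero-dimensional), and z² ∉ (x,y)A, so the Čech cohomology class [z²/(xy)] ∈ H²_m(A) is nonzero. -/

import Mathlib

open MvPolynomial

/-- The cubic cone `A = K[x,y,z]/(θx³ + θ²y³ + z³)` over `K = ℚ(θ)`. -/
abbrev CubicCone (θ : CyclotomicField 3 ℚ) : Type _ :=
  MvPolynomial (Fin 3) (CyclotomicField 3 ℚ) ⧸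
    Ideal.span
      {(C θ * X 0 ^ 3 + C (θ ^ 2) * X 1 ^ 3 + X 2 ^ 3 :
        MvPolynomial (Fin 3) (CyclotomicField 3 ℚ))}

noncomputable abbrev K3 := CyclotomicField 3 ℚ
noncomputable abbrev R0 := MvPolynomial (Fin 3) K3
noncomputable abbrev R2 := MvPolynomial (Fin 2) K3

noncomputable def e3 : R0 ≃ₐ[K3] Polynomial R2 :=
  (renameEquiv K3 (Equiv.swap (0 : Fin 3) 2)).trans (finSuccEquiv K3 2)

lemma e3_X0 : e3 (X 0) = Polynomial.C (X 1) := by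
  have h : Equiv.swap (0 : Fin 3) 2 0 = Fin.succ 1 := by decide
  rw [e3, AlgEquiv.trans_apply, renameEquiv_apply, rename_X, h, finSuccEquiv_X_succ]

lemma e3_X1 : e3 (X 1) = Polynomial.C (X 0) := by
  have h : Equiv.swap (0 : Fin 3) 2 1 = Fin.succ 0 := by decide
  rw [e3, AlgEquiv.trans_apply, renameEquiv_apply, rename_X, h, finSuccEquiv_X_succ]

lemma e3_X2 : e3 (X 2) = Polynomial.X := by
  have h : Equiv.swap (0 : Fin 3) 2 2 = 0 := by decide
  rw [e3, AlgEquiv.trans_apply, renameEquiv_apply, rename_X, h, finSuccEquiv_X_zero]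

lemma e3_C (k : K3) : e3 (C k) = Polynomial.C (C k) := by
  rw [e3, AlgEquiv.trans_apply, renameEquiv_apply, rename_C]
  simp [finSuccEquiv_apply]

lemma keyR2 (n : ℕ) (hn : 1 ≤ n) (a b : R2)
    (h : (X 1 * X 0 : R2) ^ (n-1) = X 1 ^ n * a + X 0 ^ n * b) : False := by
  have hc := congrArg (MvPolynomial.coeff
    (Finsupp.single (0 : Fin 2) (n-1) + Finsupp.single 1 (n-1))) h
  rw [mul_pow, X_pow_eq_monomial, X_pow_eq_monomial, monomial_mul, one_mul] at hc
  rw [coeff_monomial] at hc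
  rw [if_pos (by rw [add_comm])] at hc
  rw [X_pow_eq_monomial, X_pow_eq_monomial, mul_comm (monomial _ _) a,
    mul_comm (monomial _ _) b, coeff_add, coeff_mul_monomial', coeff_mul_monomial',
    if_neg ?_, if_neg ?_, add_zero] at hc
  · exact one_ne_zero hc
  · intro hle
    have := hle 0
    simp [Finsupp.single_apply] at this
    omega
  · intro hle
    have := hle 1
    simp [Finsupp.single_apply] at this
    omega

lemma key (θ : K3) (n : ℕ) (hn : 1 ≤ n) :
    (Ideal.Quotient.mk _ (X 2) : CubicCone θ) ^ 2 *
        (Ideal.Quotient.mk _ (X 0) * Ideal.Quotient.mk _ (X 1)) ^ (n - 1) ∉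
      Ideal.span ({(Ideal.Quotient.mk _ (X 0) : CubicCone θ) ^ n,
        (Ideal.Quotient.mk _ (X 1) : CubicCone θ) ^ n} : Set (CubicCone θ)) := by
  intro hmem
  set f : R0 := C θ * X 0 ^ 3 + C (θ ^ 2) * X 1 ^ 3 + X 2 ^ 3 with hf
  have h1 : (Ideal.Quotient.mk (Ideal.span {f})) (X 2 ^ 2 * (X 0 * X 1) ^ (n-1)) ∈
      (Ideal.span ({X 0 ^ n, X 1 ^ n} : Set R0)).map (Ideal.Quotient.mk (Ideal.span {f})) := by
    rw [Ideal.map_span, Set.image_pair]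
    simp only [map_mul, map_pow]
    exact hmem
  rw [Ideal.mem_quotient_iff_mem_sup, sup_comm, ← Ideal.span_union,
    Set.singleton_union, Ideal.mem_span_insert] at h1
  obtain ⟨c, w, hw, h2⟩ := h1
  rw [Ideal.mem_span_pair] at hw
  obtain ⟨a, b, hab⟩ := hw
  subst hab
  rw [hf] at h2
  -- transport to Polynomial R2
  set p : Polynomial R2 :=
    Polynomial.X ^ 3 + Polynomial.C (C θ * X 1 ^ 3 + C (θ ^ 2) * X 0 ^ 3) with hpdef
  have hp : p.Monic := by
    rw [hpdef]
    apply Polynomial.monic_X_pow_add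
    exact lt_of_le_of_lt Polynomial.degree_C_le (by norm_num)
  have hdeg : p.degree = 3 := Polynomial.degree_X_pow_add_C (by norm_num) _
  have hEq : (Polynomial.C ((X 1 * X 0 : R2) ^ (n-1)) * Polynomial.X ^ 2 : Polynomial R2)
      = (X 1 ^ n : R2) • e3 a + (X 0 ^ n : R2) • e3 b + e3 c * p := by
    have h3 := congrArg e3 h2
    simp only [map_add, map_mul, map_pow, e3_X0, e3_X1, e3_X2, e3_C] at h3
    simp only [Polynomial.smul_eq_C_mul, hpdef, map_add, map_mul, map_pow, Polynomial.C_mul,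
      Polynomial.C_add, Polynomial.C_pow]
    linear_combination h3
  have hm := congrArg (· %ₘ p) hEq
  simp only [Polynomial.add_modByMonic, Polynomial.smul_modByMonic,
    (Polynomial.modByMonic_eq_zero_iff_dvd hp).2 (dvd_mul_left p (e3 c)), add_zero,
    (Polynomial.modByMonic_eq_self_iff hp).2 (lt_of_le_of_lt
      (Polynomial.degree_C_mul_X_pow_le 2 _) (show ((2:ℕ):WithBot ℕ) < p.degree by rw [hdeg]; norm_num))] at hm
  have hc := congrArg (fun q => Polynomial.coeff q 2) hm
  simp only [Polynomial.coeff_C_mul, Polynomial.coeff_X_pow, if_true, mul_one,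
    Polynomial.coeff_add, Polynomial.coeff_smul, smul_eq_mul] at hc
  exact keyR2 n hn _ _ hc


lemma sub_const_mem (r : R0) :
    r - C (constantCoeff r) ∈ Ideal.span (Set.range (X : Fin 3 → R0)) := by
  induction r using MvPolynomial.induction_on with
  | C a => simp
  | add p q hp hq =>
    have h := Ideal.add_mem _ hp hq
    have : p + q - C (constantCoeff (p + q))
        = (p - C (constantCoeff p)) + (q - C (constantCoeff q)) := by
      rw [map_add, C_add]; ring
    rwa [this]
  | mul_X p i hp =>
    have : p * X i - C (constantCoeff (p * X i)) = p * X i := by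
      simp [map_mul]
    rw [this]
    exact Ideal.mul_mem_left _ p (Ideal.subset_span ⟨i, rfl⟩)

set_option maxHeartbeats 1000000 in
set_option synthInstance.maxHeartbeats 1000000 in
lemma dim0 (θ : K3) :
    ringKrullDim
        (CubicCone θ ⧸
          Ideal.span ({Ideal.Quotient.mk _ (X 0), Ideal.Quotient.mk _ (X 1)} :
            Set (CubicCone θ))) = 0 := by
  set f : R0 := C θ * X 0 ^ 3 + C (θ ^ 2) * X 1 ^ 3 + X 2 ^ 3 with hf
  set I : Ideal R0 := Ideal.span {f} with hI
  set J : Ideal R0 := Ideal.span ({X 0, X 1} : Set R0) with hJ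
  have hspan : Ideal.span ({Ideal.Quotient.mk I (X 0), Ideal.Quotient.mk I (X 1)} :
      Set (CubicCone θ)) = J.map (Ideal.Quotient.mk I) := by
    rw [hJ, Ideal.map_span, Set.image_pair]
  have e' : (CubicCone θ ⧸
      Ideal.span ({Ideal.Quotient.mk _ (X 0), Ideal.Quotient.mk _ (X 1)} :
        Set (CubicCone θ))) ≃+* R0 ⧸ (I ⊔ J) :=
    (Ideal.quotEquivOfEq hspan).trans (DoubleQuot.quotQuotEquivQuotSup I J)
  rw [ringKrullDim_eq_of_ringEquiv e']
  -- key memberships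
  have hx0 : (Ideal.Quotient.mk (I ⊔ J)) (X 0) = 0 :=
    Ideal.Quotient.eq_zero_iff_mem.2 (Ideal.mem_sup_right (Ideal.subset_span (by simp)))
  have hx1 : (Ideal.Quotient.mk (I ⊔ J)) (X 1) = 0 :=
    Ideal.Quotient.eq_zero_iff_mem.2 (Ideal.mem_sup_right (Ideal.subset_span (by simp)))
  have hz3 : (Ideal.Quotient.mk (I ⊔ J)) (X 2) ^ 3 = 0 := by
    rw [← map_pow, Ideal.Quotient.eq_zero_iff_mem]
    have hX23 : (X 2 : R0) ^ 3 = f - (C θ * X 0 ^ 2) * X 0 - (C (θ ^ 2) * X 1 ^ 2) * X 1 := by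
      rw [hf]; ring
    rw [hX23]
    refine Ideal.sub_mem _ (Ideal.sub_mem _ (Ideal.mem_sup_left (Ideal.subset_span rfl)) ?_) ?_
    · exact Ideal.mem_sup_right (Ideal.mul_mem_left _ _ (Ideal.subset_span (by simp)))
    · exact Ideal.mem_sup_right (Ideal.mul_mem_left _ _ (Ideal.subset_span (by simp)))
  set M : Ideal (R0 ⧸ (I ⊔ J)) := Ideal.span {Ideal.Quotient.mk (I ⊔ J) (X 2)} with hM
  -- every prime equals M
  have stepC : ∀ P : Ideal (R0 ⧸ (I ⊔ J)), P.IsPrime → P = M := by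
    intro P hP
    have hzP : Ideal.Quotient.mk (I ⊔ J) (X 2) ∈ P :=
      hP.mem_of_pow_mem 3 (hz3 ▸ P.zero_mem)
    refine le_antisymm ?_ ((Ideal.span_le).2 (by simpa using hzP))
    intro q hq
    obtain ⟨r, rfl⟩ := Ideal.Quotient.mk_surjective q
    have hw : Ideal.Quotient.mk (I ⊔ J) (r - C (constantCoeff r)) ∈ M := by
      have h1 := Ideal.mem_map_of_mem (Ideal.Quotient.mk (I ⊔ J)) (sub_const_mem r)
      rw [Ideal.map_span] at h1
      refine Ideal.span_le.2 ?_ h1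
      rintro _ ⟨_, ⟨i, rfl⟩, rfl⟩
      fin_cases i
      · simpa [hx0] using M.zero_mem
      · simpa [hx1] using M.zero_mem
      · exact Ideal.subset_span rfl
    by_cases hk : constantCoeff r = 0
    · have : (Ideal.Quotient.mk (I ⊔ J)) r
          = (Ideal.Quotient.mk (I ⊔ J)) (r - C (constantCoeff r)) := by
        rw [hk]; simp
      rwa [this]
    · exfalso
      have hMP : M ≤ P := (Ideal.span_le).2 (by simpa using hzP)
      have hCk : (Ideal.Quotient.mk (I ⊔ J)) (C (constantCoeff r)) ∈ P := by
        have : (Ideal.Quotient.mk (I ⊔ J)) (C (constantCoeff r))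
            = (Ideal.Quotient.mk (I ⊔ J)) r
              - (Ideal.Quotient.mk (I ⊔ J)) (r - C (constantCoeff r)) := by
          rw [← map_sub]; congr 1; ring
        rw [this]
        exact Ideal.sub_mem _ hq (hMP hw)
      have hunit : IsUnit ((Ideal.Quotient.mk (I ⊔ J)) (C (constantCoeff r))) := by
        refine IsUnit.of_mul_eq_one ((Ideal.Quotient.mk (I ⊔ J)) (C (constantCoeff r)⁻¹)) ?_
        rw [← map_mul, ← C_mul, mul_inv_cancel₀ hk, C_1, map_one]
      exact hP.ne_top (P.eq_top_of_isUnit_mem hCk hunit)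
  -- nontriviality
  have hne : I ⊔ J ≠ ⊤ := by
    intro htop
    have hsub : I ⊔ J ≤ RingHom.ker (constantCoeff : R0 →+* K3) := by
      refine sup_le (Ideal.span_le.2 ?_) (Ideal.span_le.2 ?_)
      · rintro _ rfl
        simp [RingHom.mem_ker, hf]
      · rintro x hx
        simp only [Set.mem_insert_iff, Set.mem_singleton_iff] at hx
        rcases hx with rfl | rfl <;> simp [RingHom.mem_ker]
    have h1 : (1 : R0) ∈ RingHom.ker (constantCoeff : R0 →+* K3) :=
      hsub (htop ▸ Submodule.mem_top)
    simp [RingHom.mem_ker] at h1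
  haveI : Nontrivial (R0 ⧸ (I ⊔ J)) := Ideal.Quotient.nontrivial_iff.mpr hne
  obtain ⟨P0⟩ : Nonempty (PrimeSpectrum (R0 ⧸ (I ⊔ J))) := inferInstance
  haveI : Unique (PrimeSpectrum (R0 ⧸ (I ⊔ J))) :=
    { default := P0
      uniq := fun P => PrimeSpectrum.ext
        ((stepC P.asIdeal P.isPrime).trans (stepC P0.asIdeal P0.isPrime).symm) }
  exact Order.krullDim_eq_zero_of_unique


/-- let `K = ℚ(θ)` with `θ` a primitive cube root of unity and
`A = K[x,y,z]/(θx³ + θ²y³ + z³)`.  Then `x, y` form a homogeneous system of parameters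
(`A/(x,y)` is zero-dimensional), `z² ∉ (x,y)A`, and the Čech class `[z²/(xy)] ∈ H²_m(A)`
is nonzero, i.e. `z²(xy)^{n-1} ∉ (xⁿ, yⁿ)A` for all `n ≥ 1`. -/
theorem stmt19 (θ : CyclotomicField 3 ℚ) (hθ : IsPrimitiveRoot θ 3) :
    ringKrullDim
        (CubicCone θ ⧸
          Ideal.span ({Ideal.Quotient.mk _ (X 0), Ideal.Quotient.mk _ (X 1)} :
            Set (CubicCone θ))) = 0 ∧
    ((Ideal.Quotient.mk _ (X 2) : CubicCone θ) ^ 2 ∉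
      Ideal.span ({Ideal.Quotient.mk _ (X 0), Ideal.Quotient.mk _ (X 1)} :
        Set (CubicCone θ))) ∧
    (∀ n : ℕ, 1 ≤ n →
      (Ideal.Quotient.mk _ (X 2) : CubicCone θ) ^ 2 *
          (Ideal.Quotient.mk _ (X 0) * Ideal.Quotient.mk _ (X 1)) ^ (n - 1) ∉
        Ideal.span ({(Ideal.Quotient.mk _ (X 0) : CubicCone θ) ^ n,
          (Ideal.Quotient.mk _ (X 1) : CubicCone θ) ^ n} : Set (CubicCone θ))) := by
  refine ⟨dim0 θ, ?_, fun n hn => key θ n hn⟩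
  have h := key θ 1 le_rfl
  simpa using h
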